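/- Let 𝓑 be a finite family of axis-parallel rectangles in ℝ² all containing the origin, with ⋂𝓑 = [a,b] × [c,d] where a ≤ 0 ≤ b and c ≤ 0 ≤ d. Let P ⊆ ℝ² be such that the intersection of any two rectangles of 𝓑 contains a point of P, and suppose no point of P lies in [a,b] × [c,d]. Suppose further 𝓑 contains, for the vertical direction, a rectangle of the form [a₀,b₀] × [c₀,d] (touching the top boundary of the common intersection) and analogously for the other three sides. Then one can choose at most four points s₁, s₂, s₃, s₄ of P (extremal points of P in the four axis-aligned slabs (−∞,a) × [c,d], (b,∞) × [c,d], [a,b] × (−∞,c), [a,b] × (d,∞)) such that every rectangle B ∈ 𝓑 avoiding all four chosen points contains points of P either in both the (closed) first and third quadrants, or in both the (closed) second and fourth quadrants. -/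

import Mathlib

open Set

lemma extremal_aux (X : Set (ℝ × ℝ)) (hX : X.Finite) (f : ℝ × ℝ → ℝ) :
    ∃ T : Finset (ℝ × ℝ), ↑T ⊆ X ∧ T.card ≤ 1 ∧
      ∀ q ∈ X, ∃ x ∈ T, x ∈ X ∧ f q ≤ f x := by
  rcases X.eq_empty_or_nonempty with h | h
  · exact ⟨∅, by simp, by simp, by simp [h]⟩
  · obtain ⟨x, hx, hmax⟩ := hX.exists_maximalFor f X h
    refine ⟨{x}, by simpa using hx, by simp, fun q hq => ⟨x, by simp, hx, ?_⟩⟩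
    by_contra hlt
    push_neg at hlt
    exact absurd (hmax hq hlt.le) (not_le.mpr hlt)

/-- Choosing at most four extremal points of P in the four slabs around the common
intersection `[A,B] × [C,D]` of the family: every rectangle avoiding all four chosen
points contains points of P in both the first and third (closed) quadrants, or in both
the second and fourth (closed) quadrants. -/
theorem stmt8 {ι : Type*} (s : Finset ι) (a b c d : ι → ℝ) (A B C D : ℝ)
    (hA : A ≤ 0) (hB : 0 ≤ B) (hC : C ≤ 0) (hD : 0 ≤ D)
    (P : Set (ℝ × ℝ)) (hP : P.Finite)
    (hcap : (⋂ i ∈ s, Set.Icc (a i) (b i) ×ˢ Set.Icc (c i) (d i))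
      = Set.Icc A B ×ˢ Set.Icc C D)
    (htwo : ∀ i ∈ s, ∀ j ∈ s,
      ∃ p ∈ P, p ∈ Set.Icc (a i) (b i) ×ˢ Set.Icc (c i) (d i)
        ∧ p ∈ Set.Icc (a j) (b j) ×ˢ Set.Icc (c j) (d j))
    (hPout : P ∩ Set.Icc A B ×ˢ Set.Icc C D = ∅)
    (htop : ∃ i ∈ s, d i = D) (hbot : ∃ i ∈ s, c i = C)
    (hright : ∃ i ∈ s, b i = B) (hleft : ∃ i ∈ s, a i = A) :
    ∃ S : Finset (ℝ × ℝ), ↑S ⊆ P ∧ S.card ≤ 4 ∧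
      ∀ i ∈ s, (∀ x ∈ S, x ∉ Set.Icc (a i) (b i) ×ˢ Set.Icc (c i) (d i)) →
        ((∃ p ∈ P, p ∈ Set.Icc (a i) (b i) ×ˢ Set.Icc (c i) (d i) ∧ 0 ≤ p.1 ∧ 0 ≤ p.2) ∧
         (∃ p ∈ P, p ∈ Set.Icc (a i) (b i) ×ˢ Set.Icc (c i) (d i) ∧ p.1 ≤ 0 ∧ p.2 ≤ 0)) ∨
        ((∃ p ∈ P, p ∈ Set.Icc (a i) (b i) ×ˢ Set.Icc (c i) (d i) ∧ p.1 ≤ 0 ∧ 0 ≤ p.2) ∧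
         (∃ p ∈ P, p ∈ Set.Icc (a i) (b i) ×ˢ Set.Icc (c i) (d i) ∧ 0 ≤ p.1 ∧ p.2 ≤ 0)) := by
  classical
  -- the common box is contained in every rectangle
  have hsub : ∀ i ∈ s, Set.Icc A B ×ˢ Set.Icc C D
      ⊆ Set.Icc (a i) (b i) ×ˢ Set.Icc (c i) (d i) := by
    intro i hi
    rw [← hcap]
    exact Set.biInter_subset_of_mem hi
  have hbounds : ∀ i ∈ s, a i ≤ A ∧ B ≤ b i ∧ c i ≤ C ∧ D ≤ d i := by
    intro i hi
    have h1 : ((A, C) : ℝ × ℝ) ∈ Set.Icc (a i) (b i) ×ˢ Set.Icc (c i) (d i) :=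
      hsub i hi ⟨⟨le_refl A, hA.trans hB⟩, ⟨le_refl C, hC.trans hD⟩⟩
    have h2 : ((B, D) : ℝ × ℝ) ∈ Set.Icc (a i) (b i) ×ˢ Set.Icc (c i) (d i) :=
      hsub i hi ⟨⟨hA.trans hB, le_refl B⟩, ⟨hC.trans hD, le_refl D⟩⟩
    exact ⟨h1.1.1, h2.1.2, h1.2.1, h2.2.2⟩
  -- the four slabs
  set L : Set (ℝ × ℝ) := {p | p ∈ P ∧ p.1 < A ∧ C ≤ p.2 ∧ p.2 ≤ D} with hLdef
  set R : Set (ℝ × ℝ) := {p | p ∈ P ∧ B < p.1 ∧ C ≤ p.2 ∧ p.2 ≤ D} with hRdef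
  set Bo : Set (ℝ × ℝ) := {p | p ∈ P ∧ p.2 < C ∧ A ≤ p.1 ∧ p.1 ≤ B} with hBodef
  set To : Set (ℝ × ℝ) := {p | p ∈ P ∧ D < p.2 ∧ A ≤ p.1 ∧ p.1 ≤ B} with hTodef
  have hLP : L ⊆ P := fun p hp => hp.1
  have hRP : R ⊆ P := fun p hp => hp.1
  have hBoP : Bo ⊆ P := fun p hp => hp.1
  have hToP : To ⊆ P := fun p hp => hp.1
  obtain ⟨T1, hT1P, hT1c, hT1max⟩ := extremal_aux L (hP.subset hLP) Prod.fst
  obtain ⟨T2, hT2P, hT2c, hT2max⟩ := extremal_aux R (hP.subset hRP) (fun p => -p.1)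
  obtain ⟨T3, hT3P, hT3c, hT3max⟩ := extremal_aux Bo (hP.subset hBoP) Prod.snd
  obtain ⟨T4, hT4P, hT4c, hT4max⟩ := extremal_aux To (hP.subset hToP) (fun p => -p.2)
  refine ⟨T1 ∪ T2 ∪ T3 ∪ T4, ?_, ?_, ?_⟩
  · intro x hx
    simp only [Finset.coe_union, Set.mem_union, Finset.mem_coe] at hx
    rcases hx with ((h | h) | h) | h
    · exact hLP (hT1P h)
    · exact hRP (hT2P h)
    · exact hBoP (hT3P h)
    · exact hToP (hT4P h)
  · calc (T1 ∪ T2 ∪ T3 ∪ T4).card ≤ (T1 ∪ T2 ∪ T3).card + T4.card := Finset.card_union_le _ _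
      _ ≤ (T1 ∪ T2).card + T3.card + T4.card := by
          have := Finset.card_union_le (T1 ∪ T2) T3; omega
      _ ≤ T1.card + T2.card + T3.card + T4.card := by
          have := Finset.card_union_le T1 T2; omega
      _ ≤ 4 := by omega
  · intro i hi havoid
    obtain ⟨haA, hbB, hcC, hdD⟩ := hbounds i hi
    have hmemS : ∀ x, (x ∈ T1 ∨ x ∈ T2 ∨ x ∈ T3 ∨ x ∈ T4) →
        x ∉ Set.Icc (a i) (b i) ×ˢ Set.Icc (c i) (d i) := by
      intro x hx
      apply havoid
      simp only [Finset.mem_union]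
      tauto
    -- no point of P in the rectangle lies in any slab
    have hnoL : ∀ q ∈ P, q ∈ Set.Icc (a i) (b i) ×ˢ Set.Icc (c i) (d i) →
        ¬(q.1 < A ∧ C ≤ q.2 ∧ q.2 ≤ D) := by
      rintro q hqP hqR ⟨h1, h2, h3⟩
      obtain ⟨x, hxT, hxL, hle⟩ := hT1max q ⟨hqP, h1, h2, h3⟩
      refine hmemS x (Or.inl hxT) ⟨⟨hqR.1.1.trans hle, ?_⟩, ⟨hcC.trans hxL.2.2.1, hxL.2.2.2.trans hdD⟩⟩
      have := hxL.2.1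
      linarith
    have hnoR : ∀ q ∈ P, q ∈ Set.Icc (a i) (b i) ×ˢ Set.Icc (c i) (d i) →
        ¬(B < q.1 ∧ C ≤ q.2 ∧ q.2 ≤ D) := by
      rintro q hqP hqR ⟨h1, h2, h3⟩
      obtain ⟨x, hxT, hxR, hle'⟩ := hT2max q ⟨hqP, h1, h2, h3⟩
      have hle : -q.1 ≤ -x.1 := hle'
      refine hmemS x (Or.inr (Or.inl hxT)) ⟨⟨?_, le_trans (by linarith) hqR.1.2⟩,
        ⟨hcC.trans hxR.2.2.1, hxR.2.2.2.trans hdD⟩⟩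
      have := hxR.2.1
      linarith
    have hnoBo : ∀ q ∈ P, q ∈ Set.Icc (a i) (b i) ×ˢ Set.Icc (c i) (d i) →
        ¬(q.2 < C ∧ A ≤ q.1 ∧ q.1 ≤ B) := by
      rintro q hqP hqR ⟨h1, h2, h3⟩
      obtain ⟨x, hxT, hxB, hle⟩ := hT3max q ⟨hqP, h1, h2, h3⟩
      refine hmemS x (Or.inr (Or.inr (Or.inl hxT)))
        ⟨⟨haA.trans hxB.2.2.1, hxB.2.2.2.trans hbB⟩, ⟨hqR.2.1.trans hle, ?_⟩⟩
      have := hxB.2.1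
      linarith
    have hnoTo : ∀ q ∈ P, q ∈ Set.Icc (a i) (b i) ×ˢ Set.Icc (c i) (d i) →
        ¬(D < q.2 ∧ A ≤ q.1 ∧ q.1 ≤ B) := by
      rintro q hqP hqR ⟨h1, h2, h3⟩
      obtain ⟨x, hxT, hxTo, hle'⟩ := hT4max q ⟨hqP, h1, h2, h3⟩
      have hle : -q.2 ≤ -x.2 := hle'
      refine hmemS x (Or.inr (Or.inr (Or.inr hxT)))
        ⟨⟨haA.trans hxTo.2.2.1, hxTo.2.2.2.trans hbB⟩, ⟨?_, le_trans (by linarith) hqR.2.2⟩⟩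
      have := hxTo.2.1
      linarith
    -- every point of P in the rectangle lies in a corner region
    have hcorner : ∀ p ∈ P, p ∈ Set.Icc (a i) (b i) ×ˢ Set.Icc (c i) (d i) →
        (p.1 < A ∨ B < p.1) ∧ (p.2 < C ∨ D < p.2) := by
      intro p hpP hpR
      have hbox : ¬(A ≤ p.1 ∧ p.1 ≤ B ∧ C ≤ p.2 ∧ p.2 ≤ D) := by
        rintro ⟨h1, h2, h3, h4⟩
        have : p ∈ P ∩ Set.Icc A B ×ˢ Set.Icc C D := ⟨hpP, ⟨h1, h2⟩, ⟨h3, h4⟩⟩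
        rw [hPout] at this
        exact this
      have hL := hnoL p hpP hpR
      have hR := hnoR p hpP hpR
      have hB' := hnoBo p hpP hpR
      have hT' := hnoTo p hpP hpR
      rcases lt_or_ge p.1 A with h | h
      · rcases lt_or_ge p.2 C with h2 | h2
        · exact ⟨Or.inl h, Or.inl h2⟩
        · rcases le_or_gt p.2 D with h3 | h3
          · exact absurd ⟨h, h2, h3⟩ hL
          · exact ⟨Or.inl h, Or.inr h3⟩
      · rcases le_or_gt p.1 B with h1 | h1
        · rcases lt_or_ge p.2 C with h2 | h2
          · exact absurd ⟨h2, h, h1⟩ hB'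
          · rcases le_or_gt p.2 D with h3 | h3
            · exact absurd ⟨h, h1, h2, h3⟩ hbox
            · exact absurd ⟨h3, h, h1⟩ hT'
        · rcases lt_or_ge p.2 C with h2 | h2
          · exact ⟨Or.inr h1, Or.inl h2⟩
          · rcases le_or_gt p.2 D with h3 | h3
            · exact absurd ⟨h1, h2, h3⟩ hR
            · exact ⟨Or.inr h1, Or.inr h3⟩
    -- quadrant existence statements
    set E1 := ∃ p ∈ P, p ∈ Set.Icc (a i) (b i) ×ˢ Set.Icc (c i) (d i) ∧ 0 ≤ p.1 ∧ 0 ≤ p.2 with hE1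
    set E2 := ∃ p ∈ P, p ∈ Set.Icc (a i) (b i) ×ˢ Set.Icc (c i) (d i) ∧ p.1 ≤ 0 ∧ 0 ≤ p.2 with hE2
    set E3 := ∃ p ∈ P, p ∈ Set.Icc (a i) (b i) ×ˢ Set.Icc (c i) (d i) ∧ p.1 ≤ 0 ∧ p.2 ≤ 0 with hE3
    set E4 := ∃ p ∈ P, p ∈ Set.Icc (a i) (b i) ×ˢ Set.Icc (c i) (d i) ∧ 0 ≤ p.1 ∧ p.2 ≤ 0 with hE4
    -- from the top-touching rectangle: a point in Q3 or Q4
    have htopE : E3 ∨ E4 := by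
      obtain ⟨j, hj, hdj⟩ := htop
      obtain ⟨p, hpP, hpi, hpj⟩ := htwo i hi j hj
      have hy : p.2 ≤ D := hdj ▸ hpj.2.2
      obtain ⟨hx, hy'⟩ := hcorner p hpP hpi
      have hyC : p.2 < C := by rcases hy' with h | h; exact h; linarith
      rcases hx with h | h
      · exact Or.inl ⟨p, hpP, hpi, by linarith, by linarith⟩
      · exact Or.inr ⟨p, hpP, hpi, by linarith, by linarith⟩
    have hbotE : E1 ∨ E2 := by
      obtain ⟨j, hj, hcj⟩ := hbot
      obtain ⟨p, hpP, hpi, hpj⟩ := htwo i hi j hj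
      have hy : C ≤ p.2 := hcj ▸ hpj.2.1
      obtain ⟨hx, hy'⟩ := hcorner p hpP hpi
      have hyD : D < p.2 := by rcases hy' with h | h; linarith; exact h
      rcases hx with h | h
      · exact Or.inr ⟨p, hpP, hpi, by linarith, by linarith⟩
      · exact Or.inl ⟨p, hpP, hpi, by linarith, by linarith⟩
    have hrightE : E2 ∨ E3 := by
      obtain ⟨j, hj, hbj⟩ := hright
      obtain ⟨p, hpP, hpi, hpj⟩ := htwo i hi j hj
      have hx : p.1 ≤ B := hbj ▸ hpj.1.2
      obtain ⟨hx', hy⟩ := hcorner p hpP hpi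
      have hxA : p.1 < A := by rcases hx' with h | h; exact h; linarith
      rcases hy with h | h
      · exact Or.inr ⟨p, hpP, hpi, by linarith, by linarith⟩
      · exact Or.inl ⟨p, hpP, hpi, by linarith, by linarith⟩
    have hleftE : E1 ∨ E4 := by
      obtain ⟨j, hj, haj⟩ := hleft
      obtain ⟨p, hpP, hpi, hpj⟩ := htwo i hi j hj
      have hx : A ≤ p.1 := haj ▸ hpj.1.1
      obtain ⟨hx', hy⟩ := hcorner p hpP hpi
      have hxB : B < p.1 := by rcases hx' with h | h; linarith; exact h
      rcases hy with h | h
      · exact Or.inr ⟨p, hpP, hpi, by linarith, by linarith⟩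
      · exact Or.inl ⟨p, hpP, hpi, by linarith, by linarith⟩
    rcases htopE with hQ3 | hQ4
    · rcases hbotE with hQ1 | hQ2
      · exact Or.inl ⟨hQ1, hQ3⟩
      · rcases hleftE with hQ1 | hQ4
        · exact Or.inl ⟨hQ1, hQ3⟩
        · exact Or.inr ⟨hQ2, hQ4⟩
    · rcases hbotE with hQ1 | hQ2
      · rcases hrightE with hQ2 | hQ3
        · exact Or.inr ⟨hQ2, hQ4⟩
        · exact Or.inl ⟨hQ1, hQ3⟩
      · exact Or.inr ⟨hQ2, hQ4⟩
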